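/- For a prime p and m ≥ 2, the group Z_p × Z_{p^m} has exactly p + 2 isolated subgroups: the trivial subgroup, the whole group, and p subgroups of order p. -/

import Mathlib

/-- `H` is isolated in `G`: every `x ∈ G` is in `H` or `⟨x⟩ ∩ H = 1`. -/
def Subgroup.IsIsolated {G : Type*} [Group G] (H : Subgroup G) : Prop :=
  ∀ x : G, x ∈ H ∨ Subgroup.zpowers x ⊓ H = ⊥

/-- `o_H(x)`: the smallest positive `m` with `x ^ m ∈ H`. -/
noncomputable def relOrder {G : Type*} [Group G] (H : Subgroup G) (x : G) : ℕ :=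
  sInf {m : ℕ | 0 < m ∧ x ^ m ∈ H}

/-- `ψ(G)`: the sum of the orders of the elements of `G`. -/
noncomputable def psi (G : Type*) [Group G] [Fintype G] : ℕ :=
  ∑ x : G, orderOf x

open Subgroup Multiplicative


section
variable {p m : ℕ} [hp : Fact p.Prime]

local notation "Q" => ZMod (p ^ m)

set_option linter.unusedSectionVars false

lemma ppow_mul_p (hm : 1 ≤ m) : (p : Q) ^ (m - 1) * (p : Q) = 0 := by
  rw [← pow_succ, Nat.sub_add_cancel hm]
  exact_mod_cast ZMod.natCast_self (p ^ m)

lemma bridge (hm : 1 ≤ m) (n : ℤ) :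
    (n : Q) * (p : Q) ^ (m - 1) = 0 ↔ (n : ZMod p) = 0 := by
  have h1 : ((n * p ^ (m-1) : ℤ) : Q) = (n : Q) * (p : Q) ^ (m - 1) := by push_cast; ring
  rw [← h1, ZMod.intCast_zmod_eq_zero_iff_dvd, ZMod.intCast_zmod_eq_zero_iff_dvd]
  have hpos : (0 : ℤ) < p := by exact_mod_cast hp.out.pos
  have hne : (p : ℤ) ^ (m - 1) ≠ 0 := by positivity
  have h2 : ((p : ℤ) ^ m : ℤ) = p ^ (m-1) * p := by
    rw [← pow_succ]; congr 1; omega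
  push_cast
  rw [h2, mul_comm n _, mul_dvd_mul_iff_left hne]

lemma bridge' (hm : 1 ≤ m) (n k : ℤ) :
    (n : Q) * (p : Q) ^ (m - 1) = (k : Q) * (p : Q) ^ (m - 1) ↔ (n : ZMod p) = (k : ZMod p) := by
  rw [← sub_eq_zero, ← sub_mul, ← Int.cast_sub, bridge hm, Int.cast_sub, sub_eq_zero]

lemma socle (hm : 1 ≤ m) (b : Q) (hb : (p : Q) * b = 0) :
    ∃ t : ℤ, b = (t : Q) * (p : Q) ^ (m - 1) := by
  have h1 : ((p * b.val : ℕ) : Q) = 0 := by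
    push_cast [ZMod.natCast_val, ZMod.cast_id] ; exact hb
  rw [ZMod.natCast_eq_zero_iff] at h1
  have h2 : p ^ (m - 1) ∣ b.val := by
    rcases h1 with ⟨c, hc⟩
    refine ⟨c, ?_⟩
    have : p * (p ^ (m-1) * c) = p * b.val := by
      rw [← mul_assoc, ← pow_succ', Nat.sub_add_cancel hm, ← hc]
    exact (Nat.eq_of_mul_eq_mul_left hp.out.pos this).symm
  rcases h2 with ⟨t, ht⟩
  refine ⟨t, ?_⟩
  have : b = ((p ^ (m-1) * t : ℕ) : Q) := by rw [← ht, ZMod.natCast_val, ZMod.cast_id]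
  rw [this]; push_cast; ring

lemma unit_cancel (n : ℕ) (hn : (n : ZMod p) ≠ 0) (x : Q) (hx : (n : Q) * x = 0) : x = 0 := by
  have hd : ¬ p ∣ n := fun h => hn ((ZMod.natCast_eq_zero_iff n p).mpr h)
  have hcop : n.Coprime (p ^ m) :=
    Nat.Coprime.pow_right _ (hp.out.coprime_iff_not_dvd.mpr hd).symm
  have : NeZero (p ^ m) := ⟨pow_ne_zero _ hp.out.ne_zero⟩
  have hu : IsUnit (n : Q) := (ZMod.isUnit_iff_coprime n (p ^ m)).mpr hcop
  exact (IsUnit.mul_right_eq_zero hu).mp hx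
end

section
variable {p m : ℕ} [hp : Fact p.Prime]
local notation "Q" => ZMod (p ^ m)
local notation "GG" => Multiplicative (ZMod p) × Multiplicative (ZMod (p ^ m))
set_option linter.unusedSectionVars false

lemma gpow_nat (g x : GG) (n : ℕ) :
    g ^ n = x ↔ (n : ZMod p) * g.1.toAdd = x.1.toAdd ∧ (n : Q) * g.2.toAdd = x.2.toAdd := by
  constructor
  · rintro rfl; simp [nsmul_eq_mul]
  · rintro ⟨h1, h2⟩
    refine Prod.ext_iff.mpr ⟨Multiplicative.toAdd.injective ?_, Multiplicative.toAdd.injective ?_⟩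
    · simpa [nsmul_eq_mul] using h1
    · simpa [nsmul_eq_mul] using h2

lemma mem_zpowers_nat (g x : GG) : x ∈ zpowers g ↔ ∃ n : ℕ, g ^ n = x := by
  rw [← mem_powers_iff_mem_zpowers, Submonoid.mem_powers_iff]

end

/-- the generator of the `c`-th isolated subgroup of order `p` -/
def gg (p m : ℕ) (c : ZMod p) : Multiplicative (ZMod p) × Multiplicative (ZMod (p ^ m)) :=
  (ofAdd (1 : ZMod p), ofAdd ((c.val : ZMod (p ^ m)) * (p : ZMod (p ^ m)) ^ (m - 1)))

section
variable {p m : ℕ} [hp : Fact p.Prime]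
local notation "Q" => ZMod (p ^ m)
local notation "GG" => Multiplicative (ZMod p) × Multiplicative (ZMod (p ^ m))
set_option linter.unusedSectionVars false

lemma gg_fst (c : ZMod p) : (gg p m c).1.toAdd = (1 : ZMod p) := rfl
lemma gg_snd (c : ZMod p) : (gg p m c).2.toAdd = ((c.val : ℤ) : Q) * (p : Q) ^ (m - 1) := by
  simp [gg]

lemma gg_pow_p (hm : 1 ≤ m) (c : ZMod p) : gg p m c ^ p = 1 := by
  rw [gpow_nat]
  constructor
  · simp [gg_fst, ZMod.natCast_self]
  · rw [gg_snd]
    have : ((1 : GG)).2.toAdd = (0 : Q) := rfl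
    rw [this, mul_comm ((c.val : ℤ) : Q) _, ← mul_assoc, mul_comm (p:Q) _, ppow_mul_p hm]
    ring

lemma gg_ne_one (c : ZMod p) : gg p m c ≠ 1 := by
  intro h
  have : (gg p m c).1.toAdd = ((1:GG)).1.toAdd := by rw [h]
  rw [gg_fst] at this
  exact one_ne_zero this
end

section
variable {p m : ℕ} [hp : Fact p.Prime]
local notation "Q" => ZMod (p ^ m)
local notation "GG" => Multiplicative (ZMod p) × Multiplicative (ZMod (p ^ m))
set_option linter.unusedSectionVars false

lemma eq_one_iff (y : GG) : y = 1 ↔ y.1.toAdd = 0 ∧ y.2.toAdd = 0 := by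
  constructor
  · rintro rfl; exact ⟨rfl, rfl⟩
  · rintro ⟨h1, h2⟩
    exact Prod.ext_iff.mpr ⟨Multiplicative.toAdd.injective h1, Multiplicative.toAdd.injective h2⟩

lemma gg_isolated (hm : 2 ≤ m) (c : ZMod p) : (zpowers (gg p m c)).IsIsolated := by
  have hm1 : 1 ≤ m := by omega
  intro x
  by_cases hx : x ∈ zpowers (gg p m c)
  · left; exact hx
  right
  rw [eq_bot_iff]
  intro y hy
  rw [Subgroup.mem_inf] at hy
  obtain ⟨hy1, hy2⟩ := hy
  obtain ⟨n, hn⟩ := (mem_zpowers_nat x y).mp hy1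
  obtain ⟨k, hk⟩ := (mem_zpowers_nat _ y).mp hy2
  rw [gpow_nat] at hn hk
  obtain ⟨hn1, hn2⟩ := hn
  obtain ⟨hk1, hk2⟩ := hk
  rw [gg_fst, mul_one] at hk1
  rw [gg_snd] at hk2
  rw [Subgroup.mem_bot, eq_one_iff]
  by_cases hkp : (k : ZMod p) = 0
  · constructor
    · rw [← hk1]; exact hkp
    · rw [← hk2, ← mul_assoc]
      have : ((k : Q)) * ((c.val : ℤ) : Q) = (((k * c.val : ℤ)) : Q) := by push_cast; ring
      rw [this, bridge hm1]
      push_cast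
      rw [hkp]; ring
  · exfalso; apply hx
    -- basic facts
    have hnp : ((n : ZMod p)) * x.1.toAdd = (k : ZMod p) := by rw [hn1, hk1]
    have hn0 : (n : ZMod p) ≠ 0 := fun h => hkp (by rw [← hnp, h, zero_mul])
    have ha0 : x.1.toAdd ≠ 0 := fun h => hkp (by rw [← hnp, h, mul_zero])
    -- p * b = 0
    have hpb : (p : Q) * x.2.toAdd = 0 := by
      apply unit_cancel n hn0
      have : (n : Q) * ((p : Q) * x.2.toAdd) = (p : Q) * ((n : Q) * x.2.toAdd) := by ring
      rw [this, hn2, ← hk2]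
      have h2 : (p : Q) * ((k:Q) * (((c.val : ℤ)) * (p : Q) ^ (m-1))) =
          (k:Q) * ((c.val : ℤ)) * ((p : Q)^(m-1) * p) := by push_cast; ring
      rw [h2, ppow_mul_p hm1, mul_zero]
    obtain ⟨t, ht⟩ := socle hm1 x.2.toAdd hpb
    -- key congruence : n * t ≡ k * c.val  [mod p]
    have hcong : ((n * t : ℤ) : ZMod p) = ((k * c.val : ℤ) : ZMod p) := by
      rw [← bridge' hm1]
      push_cast
      rw [mul_assoc, ← ht, hn2, ← hk2]
      push_cast
      ring
    -- deduce t = a * c in ZMod p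
    have hac : (t : ZMod p) = x.1.toAdd * c := by
      apply mul_left_cancel₀ hn0
      have : (n : ZMod p) * (x.1.toAdd * c) = ((n:ZMod p) * x.1.toAdd) * c := by ring
      rw [this, hnp]
      push_cast at hcong
      rw [hcong]
      simp [ZMod.natCast_val, ZMod.cast_id]
    -- conclude x = gg ^ (x.1.toAdd).val
    rw [mem_zpowers_nat]
    refine ⟨(x.1.toAdd).val, (gpow_nat _ _ _).mpr ⟨?_, ?_⟩⟩
    · rw [gg_fst, mul_one, ZMod.natCast_val, ZMod.cast_id]
    · rw [gg_snd, ht, ← mul_assoc]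
      have h1 : ((x.1.toAdd.val : Q)) * ((c.val : ℤ) : Q) = (((x.1.toAdd.val * c.val : ℤ)) : Q) := by
        push_cast; ring
      rw [h1, bridge' hm1]
      push_cast
      rw [hac]
      simp [ZMod.natCast_val, ZMod.cast_id]
end

/-- the distinguished order-`p` element in the second factor -/
def ss (p m : ℕ) : Multiplicative (ZMod p) × Multiplicative (ZMod (p ^ m)) :=
  (1, ofAdd ((p : ZMod (p ^ m)) ^ (m - 1)))

section
variable {p m : ℕ} [hp : Fact p.Prime]
local notation "Q" => ZMod (p ^ m)
local notation "GG" => Multiplicative (ZMod p) × Multiplicative (ZMod (p ^ m))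
set_option linter.unusedSectionVars false

lemma ss_fst : (ss p m).1.toAdd = (0 : ZMod p) := rfl
lemma ss_snd : (ss p m).2.toAdd = (p : Q) ^ (m - 1) := rfl

lemma ppow_ne_zero (hm1 : 1 ≤ m) : ((p : Q)) ^ (m - 1) ≠ 0 := by
  have : ((p ^ (m-1) : ℕ) : Q) = (p : Q) ^ (m-1) := by push_cast; ring
  rw [← this, Ne, ZMod.natCast_eq_zero_iff]
  intro hdvd
  have h1 : p ^ m ≤ p ^ (m - 1) :=
    Nat.le_of_dvd (pow_pos hp.out.pos _) hdvd
  have h2 : p ^ (m - 1) < p ^ m := Nat.pow_lt_pow_right hp.out.one_lt (by omega)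
  omega

lemma ss_ne_one (hm1 : 1 ≤ m) : ss p m ≠ 1 := by
  intro h
  have : (ss p m).2.toAdd = ((1:GG)).2.toAdd := by rw [h]
  rw [ss_snd] at this
  exact ppow_ne_zero hm1 this

lemma min_sub (hm1 : 1 ≤ m) (b : Q) (hb : b ≠ 0) : ∃ n : ℕ, (n : Q) * b = (p : Q) ^ (m - 1) := by
  have hqpos : 0 < p ^ m := pow_pos hp.out.pos _
  have : NeZero (p ^ m) := ⟨hqpos.ne'⟩
  have hv0 : b.val ≠ 0 := fun h => hb ((ZMod.val_eq_zero _).mp h)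
  set j := padicValNat p b.val with hj
  have hdvd : p ^ j ∣ b.val := pow_padicValNat_dvd
  set u := b.val / p ^ j with hu
  have hvu : b.val = p ^ j * u := (Nat.mul_div_cancel' hdvd).symm
  have hpu : ¬ p ∣ u := by
    intro hdu
    rcases hdu with ⟨d, hd⟩
    have : p ^ (j + 1) ∣ b.val := ⟨d, by rw [hvu, hd]; ring⟩
    exact pow_succ_padicValNat_not_dvd hv0 this
  have hjm : j < m := by
    by_contra hc
    push_neg at hc
    have h1 : p ^ m ≤ b.val :=
      Nat.le_of_dvd (Nat.pos_of_ne_zero hv0) (dvd_trans (pow_dvd_pow p hc) hdvd)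
    have h2 := ZMod.val_lt b
    omega
  have hcop : u.Coprime (p ^ m) :=
    Nat.Coprime.pow_right _ (hp.out.coprime_iff_not_dvd.mpr hpu).symm
  have hu1 : (u : Q) * ((u : Q)⁻¹) = 1 :=
    ZMod.mul_inv_of_unit _ ((ZMod.isUnit_iff_coprime u (p ^ m)).mpr hcop)
  refine ⟨((u : Q)⁻¹).val * p ^ (m - 1 - j), ?_⟩
  have hb' : b = ((p ^ j * u : ℕ) : Q) := by rw [← hvu, ZMod.natCast_val, ZMod.cast_id]
  rw [hb']
  push_cast [ZMod.natCast_val, ZMod.cast_id]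
  have hexp : (p : Q) ^ (m - 1 - j) * (p : Q) ^ j = (p : Q) ^ (m - 1) := by
    rw [← pow_add]; congr 1; omega
  calc (u:Q)⁻¹ * (p:Q) ^ (m-1-j) * ((p:Q) ^ j * (u:Q))
      = ((u:Q) * (u:Q)⁻¹) * ((p:Q) ^ (m-1-j) * (p:Q) ^ j) := by ring
    _ = (p:Q) ^ (m - 1) := by rw [hu1, hexp, one_mul]

lemma fst_zero_case (hm1 : 1 ≤ m) (H : Subgroup GG) (hs : ss p m ∉ H) {w : GG}
    (hw : w ∈ H) (h1 : w.1.toAdd = 0) : w = 1 := by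
  by_contra hne
  apply hs
  have hb : w.2.toAdd ≠ 0 := fun h => hne ((eq_one_iff w).mpr ⟨h1, h⟩)
  obtain ⟨n, hn⟩ := min_sub hm1 _ hb
  have hw' : w ^ n = ss p m :=
    (gpow_nat _ _ _).mpr ⟨by rw [h1, mul_zero, ss_fst], by rw [hn, ss_snd]⟩
  exact hw' ▸ pow_mem hw n

lemma mem_struct (hm : 2 ≤ m) {H : Subgroup GG} (hs : ss p m ∉ H) {h : GG}
    (hh : h ∈ H) (hne : h ≠ 1) :
    h.1.toAdd ≠ 0 ∧ ∃ t : ℤ, h.2.toAdd = (t : Q) * (p : Q) ^ (m - 1) := by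
  have hm1 : 1 ≤ m := by omega
  have ha : h.1.toAdd ≠ 0 := fun h0 => hne (fst_zero_case hm1 H hs hh h0)
  refine ⟨ha, ?_⟩
  -- h ^ p has zero first coordinate, hence is 1
  have hp1 : (h ^ p).1.toAdd = 0 := by
    have : (h ^ p).1.toAdd = (p : ZMod p) * h.1.toAdd := by simp [nsmul_eq_mul]
    rw [this, ZMod.natCast_self, zero_mul]
  have hpow : h ^ p = 1 := fst_zero_case hm1 H hs (pow_mem hh p) hp1
  have hpb : (p : Q) * h.2.toAdd = 0 := by
    have : (h ^ p).2.toAdd = (p : Q) * h.2.toAdd := by simp [nsmul_eq_mul]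
    rw [hpow] at this
    rw [← this]; rfl
  exact socle hm1 _ hpb

end

section
variable {p m : ℕ} [hp : Fact p.Prime]
local notation "Q" => ZMod (p ^ m)
local notation "GG" => Multiplicative (ZMod p) × Multiplicative (ZMod (p ^ m))
set_option linter.unusedSectionVars false

lemma ss_mem_top (hm : 2 ≤ m) (H : Subgroup GG) (hiso : H.IsIsolated)
    (hs : ss p m ∈ H) : H = ⊤ := by
  have hm1 : 1 ≤ m := by omega
  set e2 : GG := (1, ofAdd (1 : Q)) with he2def
  set e12 : GG := (ofAdd (1 : ZMod p), ofAdd (1 : Q)) with he12def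
  have hss2 : e2 ^ (p ^ (m - 1)) = ss p m := by
    refine (gpow_nat _ _ _).mpr ⟨?_, ?_⟩
    · rw [ss_fst]; simp [he2def]
    · rw [ss_snd]; push_cast [he2def]; simp
  have hss12 : e12 ^ (p ^ (m - 1)) = ss p m := by
    refine (gpow_nat _ _ _).mpr ⟨?_, ?_⟩
    · rw [ss_fst]
      have h0 : ((p ^ (m-1) : ℕ) : ZMod p) = 0 :=
        (ZMod.natCast_eq_zero_iff _ _).mpr (dvd_pow_self p (by omega))
      simp [he12def, h0]
    · rw [ss_snd]; push_cast [he12def]; simp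
  have he2 : e2 ∈ H := by
    rcases hiso e2 with h | h
    · exact h
    · exfalso
      have : ss p m ∈ zpowers e2 ⊓ H :=
        Subgroup.mem_inf.mpr ⟨hss2 ▸ pow_mem (mem_zpowers e2) _, hs⟩
      rw [h, Subgroup.mem_bot] at this
      exact ss_ne_one hm1 this
  have he12 : e12 ∈ H := by
    rcases hiso e12 with h | h
    · exact h
    · exfalso
      have : ss p m ∈ zpowers e12 ⊓ H :=
        Subgroup.mem_inf.mpr ⟨hss12 ▸ pow_mem (mem_zpowers e12) _, hs⟩
      rw [h, Subgroup.mem_bot] at this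
      exact ss_ne_one hm1 this
  have he1 : ((ofAdd (1 : ZMod p), 1) : GG) ∈ H := by
    have : ((ofAdd (1 : ZMod p), 1) : GG) = e12 * e2⁻¹ := by
      refine Prod.ext_iff.mpr ⟨?_, ?_⟩ <;> simp [he2def, he12def]
    rw [this]
    exact mul_mem he12 (inv_mem he2)
  rw [eq_top_iff]
  intro x _
  have hx : x = ((ofAdd (1 : ZMod p), 1) : GG) ^ (x.1.toAdd.val) * e2 ^ (x.2.toAdd.val) := by
    refine Prod.ext_iff.mpr ⟨Multiplicative.toAdd.injective ?_, Multiplicative.toAdd.injective ?_⟩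
    · simp [he2def, nsmul_eq_mul, ZMod.natCast_val, ZMod.cast_id]
    · simp [he2def, nsmul_eq_mul, ZMod.natCast_val, ZMod.cast_id]
  rw [hx]
  exact mul_mem (pow_mem he1 _) (pow_mem he2 _)

lemma isolated_cases (hm : 2 ≤ m) (H : Subgroup GG) (hiso : H.IsIsolated) :
    H = ⊥ ∨ H = ⊤ ∨ ∃ c : ZMod p, H = zpowers (gg p m c) := by
  have hm1 : 1 ≤ m := by omega
  by_cases hs : ss p m ∈ H
  · exact Or.inr (Or.inl (ss_mem_top hm H hiso hs))
  by_cases hbot : H = ⊥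
  · exact Or.inl hbot
  right; right
  obtain ⟨h0, hh0, hne0⟩ := H.bot_or_exists_ne_one.resolve_left hbot
  obtain ⟨ha, t, ht⟩ := mem_struct hm hs hh0 hne0
  set a := h0.1.toAdd with hadef
  refine ⟨a⁻¹ * (t : ZMod p), ?_⟩
  set c : ZMod p := a⁻¹ * (t : ZMod p) with hcdef
  -- gg c = h0 ^ (a⁻¹).val
  have hg : gg p m c ∈ zpowers h0 := by
    rw [mem_zpowers_nat]
    refine ⟨(a⁻¹).val, (gpow_nat _ _ _).mpr ⟨?_, ?_⟩⟩
    · rw [gg_fst, ZMod.natCast_val, ZMod.cast_id, inv_mul_cancel₀ ha]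
    · rw [gg_snd, ht]
      have h1 : (((a⁻¹).val : Q)) * ((t : Q) * (p:Q)^(m-1)) =
          (((a⁻¹).val * t : ℤ) : Q) * (p:Q)^(m-1) := by push_cast; ring
      rw [h1, bridge' hm1]
      push_cast [ZMod.natCast_val, ZMod.cast_id]
      rw [hcdef]
  -- h0 ∈ zpowers (gg c)
  have hg' : h0 ∈ zpowers (gg p m c) := by
    rw [mem_zpowers_nat]
    refine ⟨a.val, (gpow_nat _ _ _).mpr ⟨?_, ?_⟩⟩
    · rw [gg_fst, mul_one, ZMod.natCast_val, ZMod.cast_id]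
    · rw [gg_snd, ht]
      have h1 : ((a.val : Q)) * (((c.val : ℤ) : Q) * (p:Q)^(m-1)) =
          ((a.val * c.val : ℤ) : Q) * (p:Q)^(m-1) := by push_cast; ring
      rw [h1, bridge' hm1]
      push_cast [ZMod.natCast_val, ZMod.cast_id]
      rw [hcdef, ← mul_assoc, mul_inv_cancel₀ ha, one_mul]
  apply le_antisymm
  · -- H ≤ zpowers (gg c)
    intro h hh
    by_cases hne : h = 1
    · rw [hne]; exact one_mem _
    obtain ⟨ha', t', ht'⟩ := mem_struct hm hs hh hne
    set v := (h.1.toAdd * a⁻¹).val with hvdef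
    have hw : h * (h0 ^ v)⁻¹ ∈ H := mul_mem hh (inv_mem (pow_mem hh0 v))
    have hw1 : (h * (h0 ^ v)⁻¹).1.toAdd = 0 := by
      have : (h * (h0 ^ v)⁻¹).1.toAdd = h.1.toAdd - (v : ZMod p) * a := by
        simp [nsmul_eq_mul, sub_eq_add_neg, hadef]
      rw [this, hvdef, ZMod.natCast_val, ZMod.cast_id, mul_assoc, inv_mul_cancel₀ ha,
        mul_one, sub_self]
    have := fst_zero_case hm1 H hs hw hw1
    have hh0v : h = h0 ^ v := by
      have h2 := mul_inv_eq_one.mp this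
      exact h2
    rw [hh0v]
    exact pow_mem hg' v
  · exact zpowers_le.mpr ((zpowers_le.mpr hh0) hg)
end

section
variable {p m : ℕ} [hp : Fact p.Prime]
local notation "Q" => ZMod (p ^ m)
local notation "GG" => Multiplicative (ZMod p) × Multiplicative (ZMod (p ^ m))
set_option linter.unusedSectionVars false

lemma bot_isolated : (⊥ : Subgroup GG).IsIsolated := fun x => Or.inr (inf_bot_eq _)

lemma top_isolated : (⊤ : Subgroup GG).IsIsolated := fun x => Or.inl trivial

lemma orderOf_gg (hm1 : 1 ≤ m) (c : ZMod p) : orderOf (gg p m c) = p :=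
  orderOf_eq_prime (gg_pow_p hm1 c) (gg_ne_one c)

lemma card_gg (hm1 : 1 ≤ m) (c : ZMod p) : Nat.card (zpowers (gg p m c)) = p := by
  rw [Nat.card_zpowers, orderOf_gg hm1]

lemma gg_inj (hm : 2 ≤ m) : Function.Injective (fun c : ZMod p => zpowers (gg p m c)) := by
  have hm1 : 1 ≤ m := by omega
  intro c c' h
  simp only at h
  have hmem : gg p m c' ∈ zpowers (gg p m c) := h ▸ mem_zpowers _
  obtain ⟨n, hn⟩ := (mem_zpowers_nat _ _).mp hmem
  obtain ⟨h1, h2⟩ := (gpow_nat _ _ _).mp hn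
  rw [gg_fst, gg_fst, mul_one] at h1
  rw [gg_snd, gg_snd] at h2
  have hb : ((n * c.val : ℤ) : ZMod p) = ((c'.val : ℤ) : ZMod p) := by
    rw [← bridge' hm1]
    push_cast
    rw [← mul_assoc] at h2
    push_cast at h2
    exact h2
  push_cast [ZMod.natCast_val, ZMod.cast_id] at hb
  rw [h1, one_mul] at hb
  exact hb

lemma card_GG : Nat.card GG = p * p ^ m := by
  have : NeZero (p ^ m) := ⟨(pow_pos hp.out.pos m).ne'⟩
  simp [Nat.card_prod, Nat.card_zmod]

end

theorem stmt13 {p : ℕ} [Fact p.Prime] {m : ℕ} (hm : 2 ≤ m) :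
    Nat.card {H : Subgroup (Multiplicative (ZMod p) × Multiplicative (ZMod (p ^ m))) |
        H.IsIsolated} = p + 2 ∧
    Nat.card {H : Subgroup (Multiplicative (ZMod p) × Multiplicative (ZMod (p ^ m))) |
        H.IsIsolated ∧ Nat.card H = p} = p := by
  have hm1 : 1 ≤ m := by omega
  have hp1 : 1 < p := (Fact.out : p.Prime).one_lt
  have hpm : 1 < p ^ m := one_lt_pow₀ hp1 (by omega)
  set K : ZMod p → Subgroup (Multiplicative (ZMod p) × Multiplicative (ZMod (p ^ m))) :=
    fun c => zpowers (gg p m c) with hK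
  have hcK : ∀ c, Nat.card (K c) = p := card_gg hm1
  have hcbot : Nat.card ((⊥ : Subgroup (Multiplicative (ZMod p) × Multiplicative (ZMod (p ^ m))))) = 1 :=
    Subgroup.card_bot
  have hctop : Nat.card ((⊤ : Subgroup (Multiplicative (ZMod p) × Multiplicative (ZMod (p ^ m))))) = p * p ^ m := by
    rw [Subgroup.card_top, card_GG]
  have hppm : p * p ^ m ≠ p := by nlinarith
  have hbotK : ∀ c, (⊥ : Subgroup _) ≠ K c := by
    intro c h
    have := hcK c
    rw [← h, hcbot] at this
    omega
  have htopK : ∀ c, (⊤ : Subgroup _) ≠ K c := by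
    intro c h
    have := hcK c
    rw [← h, hctop] at this
    exact hppm this
  have hbt : (⊥ : Subgroup (Multiplicative (ZMod p) × Multiplicative (ZMod (p ^ m)))) ≠ ⊤ := by
    intro h
    rw [h, hctop] at hcbot
    nlinarith
  have hSet : {H : Subgroup (Multiplicative (ZMod p) × Multiplicative (ZMod (p ^ m))) |
      H.IsIsolated} = insert ⊥ (insert ⊤ (Set.range K)) := by
    ext H
    simp only [Set.mem_setOf_eq, Set.mem_insert_iff, Set.mem_range]
    constructor
    · intro h
      rcases isolated_cases hm H h with h | h | ⟨c, h⟩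
      · exact Or.inl h
      · exact Or.inr (Or.inl h)
      · exact Or.inr (Or.inr ⟨c, h.symm⟩)
    · rintro (rfl | rfl | ⟨c, rfl⟩)
      · exact bot_isolated
      · exact top_isolated
      · exact gg_isolated hm c
  have hfin : (Set.range K).Finite := Set.finite_range K
  have hrcard : (Set.range K).ncard = p := by
    rw [← Nat.card_coe_set_eq, Nat.card_range_of_injective (gg_inj hm), Nat.card_zmod]
  have hSet2 : {H : Subgroup (Multiplicative (ZMod p) × Multiplicative (ZMod (p ^ m))) |
      H.IsIsolated ∧ Nat.card H = p} = Set.range K := by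
    ext H
    simp only [Set.mem_setOf_eq, Set.mem_range]
    constructor
    · rintro ⟨hiso, hcard⟩
      rcases isolated_cases hm H hiso with h | h | ⟨c, h⟩
      · rw [h, hcbot] at hcard; omega
      · rw [h, hctop] at hcard; exact absurd hcard hppm
      · exact ⟨c, h.symm⟩
    · rintro ⟨c, rfl⟩
      exact ⟨gg_isolated hm c, hcK c⟩
  constructor
  · rw [hSet, Nat.card_coe_set_eq]
    rw [Set.ncard_insert_of_notMem ?_ ((hfin.insert ⊤)),
        Set.ncard_insert_of_notMem ?_ hfin, hrcard]
    · rintro ⟨c, hc⟩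
      exact htopK c hc.symm
    · rintro (h | ⟨c, hc⟩)
      · exact hbt h
      · exact hbotK c hc.symm
  · rw [hSet2, Nat.card_coe_set_eq, hrcard]
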